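/- Let 0 < q < 1 and let (z_j)_{j ≥ 1} be a sequence of real numbers with 0 ≤ z_j ≤ 1/√j for all j ≥ 1. Then there exists a constant C > 0 (depending only on q) such that for all integers t ≥ 2: Σ_{j=1}^t q^{t−j} z_j ≤ C (ln t) / √t. -/
import Mathlib


theorem stmt_12 (q : ℝ) (hq0 : 0 < q) (hq1 : q < 1)
    (z : ℕ → ℝ) (hz0 : ∀ j : ℕ, 1 ≤ j → 0 ≤ z j)
    (hz : ∀ j : ℕ, 1 ≤ j → z j ≤ 1 / Real.sqrt j) :
    ∃ C > 0, ∀ t : ℕ, 2 ≤ t →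
      ∑ j ∈ Finset.Icc 1 t, q ^ (t - j) * z j ≤ C * Real.log t / Real.sqrt t := by
  have hqabs : ‖q‖ < 1 := by rw [Real.norm_eq_abs, abs_of_pos hq0]; exact hq1
  have hsum : Summable (fun k : ℕ => q ^ k * (k + 1 : ℝ)) := by
    have h1 : Summable (fun k : ℕ => (k : ℝ) ^ 1 * q ^ k) :=
      summable_pow_mul_geometric_of_norm_lt_one 1 hqabs
    have h2 : Summable (fun k : ℕ => q ^ k) := summable_geometric_of_lt_one hq0.le hq1
    have := h1.add h2
    convert this using 2 with k
    ring
  set S : ℝ := ∑' k : ℕ, q ^ k * (k + 1 : ℝ) with hS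
  have hterm_nonneg : ∀ k : ℕ, 0 ≤ q ^ k * (k + 1 : ℝ) := fun k => by positivity
  have hS1 : (1 : ℝ) ≤ S := by
    have := Summable.le_tsum hsum 0 (fun k _ => hterm_nonneg k)
    simpa using this
  have hSpos : 0 < S := lt_of_lt_of_le one_pos hS1
  have hlog2 : 0 < Real.log 2 := Real.log_pos (by norm_num)
  refine ⟨S / Real.log 2, div_pos hSpos hlog2, ?_⟩
  intro t ht
  have htpos : (0 : ℝ) < t := by positivity
  have hst : 0 < Real.sqrt t := Real.sqrt_pos.mpr htpos
  -- step 1: termwise bound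
  have key : ∀ j ∈ Finset.Icc 1 t,
      q ^ (t - j) * z j ≤ q ^ (t - j) * Real.sqrt ((t - j : ℕ) + 1) / Real.sqrt t := by
    intro j hj
    rw [Finset.mem_Icc] at hj
    obtain ⟨hj1, hjt⟩ := hj
    have hjpos : (0 : ℝ) < j := by exact_mod_cast hj1
    have hsj : 0 < Real.sqrt j := Real.sqrt_pos.mpr hjpos
    have hnat : t ≤ j * (t - j + 1) := by
      have := Nat.sub_add_cancel hjt
      nlinarith [Nat.sub_le t j, Nat.le_sub_of_add_le (by omega : j + 0 ≤ t)]
    have hreal : (t : ℝ) ≤ (j : ℝ) * ((t - j : ℕ) + 1) := by exact_mod_cast hnat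
    have hsqrt : Real.sqrt t ≤ Real.sqrt j * Real.sqrt ((t - j : ℕ) + 1) := by
      rw [← Real.sqrt_mul (Nat.cast_nonneg j)]
      exact Real.sqrt_le_sqrt hreal
    have hz' : z j ≤ Real.sqrt ((t - j : ℕ) + 1) / Real.sqrt t := by
      refine le_trans (hz j hj1) ?_
      rw [div_le_div_iff₀ hsj hst]
      simpa [one_mul, mul_comm] using hsqrt
    have hq' : 0 ≤ q ^ (t - j) := pow_nonneg hq0.le _
    calc q ^ (t - j) * z j ≤ q ^ (t - j) * (Real.sqrt ((t - j : ℕ) + 1) / Real.sqrt t) :=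
          mul_le_mul_of_nonneg_left hz' hq'
      _ = q ^ (t - j) * Real.sqrt ((t - j : ℕ) + 1) / Real.sqrt t := by ring
  have step1 : ∑ j ∈ Finset.Icc 1 t, q ^ (t - j) * z j ≤
      (∑ j ∈ Finset.Icc 1 t, q ^ (t - j) * Real.sqrt ((t - j : ℕ) + 1)) / Real.sqrt t := by
    rw [Finset.sum_div]
    exact Finset.sum_le_sum key
  -- step 2: reindex
  have step2 : ∑ j ∈ Finset.Icc 1 t, q ^ (t - j) * Real.sqrt ((t - j : ℕ) + 1)
      = ∑ k ∈ Finset.range t, q ^ k * Real.sqrt (k + 1) := by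
    refine Finset.sum_nbij' (fun j => t - j) (fun k => t - k) ?_ ?_ ?_ ?_ ?_ <;>
      intro a ha <;>
      simp only [Finset.mem_Icc, Finset.mem_range] at * <;>
      omega
  -- step 3: bound by tsum
  have step3 : ∑ k ∈ Finset.range t, q ^ k * Real.sqrt (k + 1) ≤ S := by
    refine le_trans (Finset.sum_le_sum (fun k _ => ?_)) (Summable.sum_le_tsum _ (fun k _ => hterm_nonneg k) hsum)
    have h1 : Real.sqrt ((k : ℝ) + 1) ≤ (k : ℝ) + 1 := by
      have := Real.sqrt_le_sqrt (by positivity : (0:ℝ) ≤ (k:ℝ)+1)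
      nlinarith [Real.sq_sqrt (by positivity : (0:ℝ) ≤ (k:ℝ)+1),
        Real.sqrt_nonneg ((k:ℝ)+1)]
    exact mul_le_mul_of_nonneg_left h1 (pow_nonneg hq0.le _)
  -- combine
  have hlogt : Real.log 2 ≤ Real.log t := by
    apply Real.log_le_log (by norm_num)
    exact_mod_cast ht
  calc ∑ j ∈ Finset.Icc 1 t, q ^ (t - j) * z j
      ≤ (∑ j ∈ Finset.Icc 1 t, q ^ (t - j) * Real.sqrt ((t - j : ℕ) + 1)) / Real.sqrt t := step1
    _ ≤ S / Real.sqrt t := by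
        gcongr
        rw [step2]; exact step3
    _ ≤ S / Real.log 2 * Real.log t / Real.sqrt t := by
        gcongr
        rw [div_mul_eq_mul_div, le_div_iff₀ hlog2]
        nlinarith
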